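/- For all real numbers x1, x2 with 0 < x1 < x2 < 1, the quantity T(x1, x2) := max( 2(1 − x2), max(2·x1, x2 − x1) + (x2 − x1) ) + max(x2, 1 − x2) satisfies T(x1, x2) ≥ 7/5, with equality if and only if (x1, x2) = (1/5, 3/5). Hence the total time of Protocol 3.2(x1, x2) for implementing a bipartite unitary of double-group form with two repeater nodes is minimized at positions (L/5, 3L/5), where it equals 7L/(5c). -/

import Mathlib

/-- For all reals `0 < x1 < x2 < 1`, the total time of Protocol 3.2(x1,x2),
`T(x1,x2) = max(2(1−x2), max(2x1, x2−x1) + (x2−x1)) + max(x2, 1−x2)`,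
is at least `7/5`, with equality iff `(x1, x2) = (1/5, 3/5)`. -/
theorem protocol_3_2_time (x1 x2 : ℝ)
    (h0 : 0 < x1) (h12 : x1 < x2) (h21 : x2 < 1) :
    7 / 5 ≤ max (2 * (1 - x2)) (max (2 * x1) (x2 - x1) + (x2 - x1))
        + max x2 (1 - x2) ∧
    (max (2 * (1 - x2)) (max (2 * x1) (x2 - x1) + (x2 - x1)) + max x2 (1 - x2)
        = 7 / 5 ↔ x1 = 1 / 5 ∧ x2 = 3 / 5) := by
  have hA1 : 2 * (1 - x2) ≤ max (2 * (1 - x2)) (max (2 * x1) (x2 - x1) + (x2 - x1)) :=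
    le_max_left _ _
  have hA2 : 2 * x1 + (x2 - x1) ≤ max (2 * (1 - x2)) (max (2 * x1) (x2 - x1) + (x2 - x1)) :=
    le_trans (add_le_add_left (le_max_left _ _) _) (le_max_right _ _)
  have hA3 : (x2 - x1) + (x2 - x1) ≤ max (2 * (1 - x2)) (max (2 * x1) (x2 - x1) + (x2 - x1)) :=
    le_trans (add_le_add_left (le_max_right _ _) _) (le_max_right _ _)
  have hB1 : x2 ≤ max x2 (1 - x2) := le_max_left _ _
  constructor
  · linarith
  constructor
  · intro h
    constructor <;> linarith
  · rintro ⟨h1, h2⟩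
    subst h1; subst h2
    norm_num
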